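/- Consider a commutative square of functors u ∘ v̄ = v ∘ ū (with v̄ : P ⟶ L, ū : P ⟶ M, u : L ⟶ K, v : M ⟶ K) together with adjunctions f ⊣ u, f̄ ⊣ ū, v ⊣ g, v̄ ⊣ ḡ. Let π : f v ⟶ v̄ f̄ be the mate of the identity 2-cell v ū = u v̄ under f ⊣ u and f̄ ⊣ ū, and let σ : ū ḡ ⟶ g u be the mate of the identity under v ⊣ g and v̄ ⊣ ḡ. Then there is a bijection between natural transformations π̌ : v̄ f̄ ⟶ f v with π ∘ π̌ = 1 and natural transformations σ̂ : g u ⟶ ū ḡ with σ̂ ∘ σ = 1. -/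

import Mathlib

open CategoryTheory

universe v₁ v₂ v₃ v₄ u₁ u₂ u₃ u₄

/-- For a commutative square u v̄ = v ū with adjunctions f ⊣ u, f̄ ⊣ ū, v ⊣ g, v̄ ⊣ ḡ, there
is a bijection between sections π̌ of the mate π : fv ⟶ v̄ f̄ of the identity 2-cell and
retractions σ̂ of the mate σ : ū ḡ ⟶ g u of the identity 2-cell. -/
theorem section_of_pi_equiv_retraction_of_sigma
    {P : Type u₁} {L : Type u₂} {M : Type u₃} {K : Type u₄}
    [Category.{v₁} P] [Category.{v₂} L] [Category.{v₃} M] [Category.{v₄} K]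
    (vbar : P ⥤ L) (ubar : P ⥤ M) (u : L ⥤ K) (v : M ⥤ K)
    (e : vbar ⋙ u ≅ ubar ⋙ v)
    (f : K ⥤ L) (adjf : f ⊣ u)
    (fbar : M ⥤ P) (adjfbar : fbar ⊣ ubar)
    (g : K ⥤ M) (adjv : v ⊣ g)
    (gbar : L ⥤ P) (adjvbar : vbar ⊣ gbar) :
    Nonempty
      ({πc : (fbar ⋙ vbar) ⟶ (v ⋙ f) //
          πc ≫ (mateEquiv adjfbar adjf).symm e.inv = 𝟙 (fbar ⋙ vbar)} ≃
       {σh : (u ⋙ g) ⟶ (gbar ⋙ ubar) //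
          (mateEquiv adjvbar adjv) e.inv ≫ σh = 𝟙 (gbar ⋙ ubar)}) := by
  set B := adjfbar.comp adjvbar
  set A := adjv.comp adjf
  have key : conjugateEquiv B A ((mateEquiv adjfbar adjf).symm e.inv) =
      mateEquiv adjvbar adjv e.inv := by
    rw [← iterated_mateEquiv_conjugateEquiv adjfbar adjf adjv adjvbar]
    erw [Equiv.apply_symm_apply]
  refine ⟨Equiv.subtypeEquiv (conjugateEquiv A B) fun πc => ?_⟩
  rw [← key]
  constructor
  · intro h
    erw [conjugateEquiv_comp B A B, h, conjugateEquiv_id]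
  · intro h
    apply (conjugateEquiv B B).injective
    erw [← conjugateEquiv_comp B A B, h, conjugateEquiv_id]
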